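/- For every T > 0 there exists a constant C₁, independent of n, such that for every integer n ≥ 2, every x ∈ [0,1] and all 0 ≤ s ≤ t ≤ T, ∫₀ˢ ∫₀¹ (Gⁿ(t-r, x, y) - Gⁿ(s-r, x, y))² dy dr ≤ C₁·√(t-s). -/

import Mathlib

/-- `φ_j(x) = √2 sin(jπx)`. -/
noncomputable def phi (j : ℕ) (x : ℝ) : ℝ := Real.sqrt 2 * Real.sin ((j : ℝ) * Real.pi * x)

/-- The eigenvalue `λ_j^n = -4n² sin²(jπ/(2n))` of `n²Aⁿ`. -/
noncomputable def lamN (n j : ℕ) : ℝ :=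
  -4 * (n : ℝ)^2 * (Real.sin ((j : ℝ) * Real.pi / (2 * n)))^2

/-- `k_n(y) = ⌊ny⌋/n`. -/
noncomputable def kn (n : ℕ) (y : ℝ) : ℝ := (⌊(n : ℝ) * y⌋ : ℝ) / n

/-- `φ_j^n`, the piecewise linear interpolation of `φ_j` on the grid `{k/n}`:
for `x ∈ [k/n, (k+1)/n]`, `φ_j^n(x) = φ_j(k/n) + (nx - k)(φ_j((k+1)/n) - φ_j(k/n))`. -/
noncomputable def phiLin (n j : ℕ) (x : ℝ) : ℝ :=
  phi j ((⌊(n : ℝ) * x⌋ : ℝ) / n)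
    + ((n : ℝ) * x - (⌊(n : ℝ) * x⌋ : ℝ))
      * (phi j (((⌊(n : ℝ) * x⌋ : ℝ) + 1) / n) - phi j ((⌊(n : ℝ) * x⌋ : ℝ) / n))

/-- The discretized kernel `Gⁿ(t,x,y) = Σ_{j=1}^{n-1} e^{λ_j^n t} φ_j^n(x) φ_j(k_n(y))`. -/
noncomputable def GN (n : ℕ) (t x y : ℝ) : ℝ :=
  ∑ j ∈ Finset.Icc 1 (n - 1), Real.exp (lamN n j * t) * phiLin n j x * phi j (kn n y)

open Real MeasureTheory Finset

lemma sum_cos_even (n p : ℕ) (hp : 0 < p) (hpn : p < n) :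
    ∑ k ∈ Finset.range n, Real.cos (2*(p:ℝ)*π*k/n) = 0 := by
  have hn0 : 0 < n := lt_trans hp hpn
  have hn : (0:ℝ) < n := by exact_mod_cast hn0
  set β : ℝ := (p:ℝ)*π/n with hβ
  have hβpos : 0 < β := by positivity
  have hβlt : β < π := by
    rw [hβ, div_lt_iff₀ hn]
    have : (p:ℝ) < n := by exact_mod_cast hpn
    nlinarith [Real.pi_pos]
  have hsin : Real.sin β ≠ 0 := ne_of_gt (Real.sin_pos_of_pos_of_lt_pi hβpos hβlt)
  have key : (∑ k ∈ Finset.range n, Real.cos (2*(p:ℝ)*π*k/n)) * (2 * Real.sin β) = 0 := by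
    rw [Finset.sum_mul]
    have : ∀ k ∈ Finset.range n, Real.cos (2*(p:ℝ)*π*k/n) * (2 * Real.sin β)
        = Real.sin ((2*((k:ℝ)+1)-1)*β) - Real.sin ((2*(k:ℝ)-1)*β) := by
      intro k _
      have h1 : (2*((k:ℝ)+1)-1)*β = 2*(k:ℝ)*β + β := by ring
      have h2 : (2*(k:ℝ)-1)*β = 2*(k:ℝ)*β - β := by ring
      rw [h1, h2, Real.sin_add, Real.sin_sub]
      have h3 : 2*(p:ℝ)*π*k/n = 2*(k:ℝ)*β := by rw [hβ]; field_simp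
      rw [h3]; ring
    rw [Finset.sum_congr rfl this]
    have tele := Finset.sum_range_sub (fun k => Real.sin ((2*(k:ℝ)-1)*β)) n
    simp only [Nat.cast_add, Nat.cast_one] at tele ⊢
    rw [tele]
    have hnb : (2*(n:ℝ)-1)*β = -β + (p:ℝ)*(2*π) := by
      rw [hβ]; field_simp; ring
    rw [hnb, Real.sin_add_nat_mul_two_pi (-β) p]
    norm_num [Real.sin_neg]
  have h2 : (2 : ℝ) * Real.sin β ≠ 0 := mul_ne_zero two_ne_zero hsin
  exact (mul_eq_zero.1 key).resolve_right h2

lemma cos_nat_pi_of_odd {m : ℕ} (hm : Odd m) : Real.cos ((m:ℝ)*π) = -1 := by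
  obtain ⟨q, hq⟩ := hm
  have h : (m:ℝ)*π = (q:ℝ)*(2*π) + π := by rw [hq]; push_cast; ring
  rw [h, Real.cos_add_pi, Real.cos_nat_mul_two_pi]

lemma sum_cos_odd (n m : ℕ) (hn : 0 < n) (hm : Odd m) :
    ∑ k ∈ Finset.range n, Real.cos ((m:ℝ)*π*k/n) = 1 := by
  have hnR : (0:ℝ) < n := by exact_mod_cast hn
  have hcm : Real.cos ((m:ℝ)*π) = -1 := cos_nat_pi_of_odd hm
  have hsm : Real.sin ((m:ℝ)*π) = 0 := by
    have := Real.sin_nat_mul_pi m; simpa using this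
  have hflip : ∀ k ∈ Finset.Ico 1 n, Real.cos ((m:ℝ)*π*((n - k : ℕ):ℝ)/n)
      = - Real.cos ((m:ℝ)*π*k/n) := by
    intro k hk
    rw [Finset.mem_Ico] at hk
    have hkn : ((n - k : ℕ) : ℝ) = (n:ℝ) - k := by
      rw [Nat.cast_sub hk.2.le]
    rw [hkn]
    have h : (m:ℝ)*π*((n:ℝ)-k)/n = (m:ℝ)*π - (m:ℝ)*π*k/n := by field_simp
    rw [h, Real.cos_sub, hcm, hsm]; ring
  have hzero : ∑ k ∈ Finset.Ico 1 n, Real.cos ((m:ℝ)*π*k/n) = 0 := by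
    apply Finset.sum_involution (fun a _ => n - a)
    · intro a ha
      rw [hflip a ha]; ring
    · intro a ha hfa
      rw [Finset.mem_Ico] at ha
      intro heq
      apply hfa
      have hna : n = 2 * a := by omega
      obtain ⟨q, hq⟩ := hm
      have harg : (m:ℝ)*π*a/n = (q:ℝ)*π + π/2 := by
        rw [hna, hq]; push_cast
        have ha0 : (a:ℝ) ≠ 0 := Nat.cast_ne_zero.mpr (by omega)
        field_simp
      rw [harg, Real.cos_add_pi_div_two, Real.sin_nat_mul_pi, neg_zero]
    · intro a ha
      rw [Finset.mem_Ico] at ha ⊢; omega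
    · intro a ha
      rw [Finset.mem_Ico] at ha; omega
  have hsplit : ∑ k ∈ Finset.range n, Real.cos ((m:ℝ)*π*k/n)
      = Real.cos ((m:ℝ)*π*0/n) + ∑ k ∈ Finset.Ico 1 n, Real.cos ((m:ℝ)*π*k/n) := by
    rw [Finset.range_eq_Ico, Finset.sum_eq_sum_Ico_succ_bot hn]
    norm_num
  rw [hsplit, hzero]
  norm_num

lemma cos_even_sum' (n m : ℕ) (hm : ∃ p, m = 2*p ∧ 0 < p ∧ p < n) :
    ∑ k ∈ Finset.range n, Real.cos ((m:ℝ)*π*k/n) = 0 := by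
  obtain ⟨p, hm, hp, hpn⟩ := hm
  have : ∀ k : ℕ, (m:ℝ)*π*(k:ℝ)/n = 2*(p:ℝ)*π*k/n := by
    intro k; rw [hm]; push_cast; ring
  rw [Finset.sum_congr rfl (fun k _ => by rw [this k])]
  exact sum_cos_even n p hp hpn

lemma disc_orth_aux (n j l : ℕ) (hn : 2 ≤ n) (hl1 : 1 ≤ l) (hlj : l ≤ j) (hj2 : j ≤ n - 1) :
    ∑ k ∈ Finset.range n, Real.sin ((j:ℝ)*π*k/n) * Real.sin ((l:ℝ)*π*k/n)
      = if j = l then (n:ℝ)/2 else 0 := by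
  have hn0 : 0 < n := by omega
  have hjn : j < n := by omega
  have hps : ∀ k : ℕ, Real.sin ((j:ℝ)*π*k/n) * Real.sin ((l:ℝ)*π*k/n)
      = (Real.cos (((j - l : ℕ):ℝ)*π*k/n) - Real.cos (((j + l : ℕ):ℝ)*π*k/n)) / 2 := by
    intro k
    have hc : ((j - l : ℕ):ℝ) = (j:ℝ) - l := by rw [Nat.cast_sub hlj]
    have hc2 : ((j + l : ℕ):ℝ) = (j:ℝ) + l := by push_cast; ring
    have ha : ((j:ℝ) - l)*π*k/n = (j:ℝ)*π*k/n - (l:ℝ)*π*k/n := by ring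
    have hb : ((j:ℝ) + l)*π*k/n = (j:ℝ)*π*k/n + (l:ℝ)*π*k/n := by ring
    rw [hc, hc2, ha, hb, Real.cos_sub, Real.cos_add]
    ring
  rw [Finset.sum_congr rfl (fun k _ => hps k), ← Finset.sum_div, Finset.sum_sub_distrib]
  by_cases hjl : j = l
  · subst hjl
    simp only [Nat.sub_self, Nat.cast_zero, zero_mul, zero_div, Real.cos_zero, if_pos rfl]
    rw [cos_even_sum' n (j + j) ⟨j, by omega, by omega, hjn⟩,
      Finset.sum_const, Finset.card_range]
    simp
  · rw [if_neg hjl]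
    have hd1 : 1 ≤ j - l := by omega
    rcases Nat.even_or_odd (j - l) with he | ho
    · obtain ⟨p, hp⟩ := he
      have hex1 : ∃ p, j - l = 2*p ∧ 0 < p ∧ p < n := by
        refine ⟨p, ?_, ?_, ?_⟩ <;> omega
      have hex2 : ∃ q, j + l = 2*q ∧ 0 < q ∧ q < n := by
        refine ⟨p + l, ?_, ?_, ?_⟩ <;> omega
      rw [cos_even_sum' n (j - l) hex1, cos_even_sum' n (j + l) hex2]
      norm_num
    · obtain ⟨p, hp⟩ := ho
      have hox : Odd (j - l) := ⟨p, by omega⟩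
      have hox2 : Odd (j + l) := ⟨p + l, by omega⟩
      rw [sum_cos_odd n (j - l) hn0 hox, sum_cos_odd n (j + l) hn0 hox2]
      norm_num

lemma disc_orth (n j l : ℕ) (hn : 2 ≤ n) (hj1 : 1 ≤ j) (hj2 : j ≤ n - 1)
    (hl1 : 1 ≤ l) (hl2 : l ≤ n - 1) :
    ∑ k ∈ Finset.range n, Real.sin ((j:ℝ)*π*k/n) * Real.sin ((l:ℝ)*π*k/n)
      = if j = l then (n:ℝ)/2 else 0 := by
  rcases le_total l j with h | h
  · exact disc_orth_aux n j l hn hl1 h hj2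
  · rw [Finset.sum_congr rfl (fun k _ => mul_comm _ _), disc_orth_aux n l j hn hj1 h hl2]
    by_cases hjl : j = l <;> simp [hjl, eq_comm]

lemma integral_comp_kn (n : ℕ) (hn : 0 < n) (F : ℝ → ℝ) (hF : Continuous F) :
    ∫ y in (0:ℝ)..1, F (kn n y) = (∑ k ∈ Finset.range n, F ((k:ℝ)/n)) / n := by
  have hnR : (0:ℝ) < n := by exact_mod_cast hn
  set a : ℕ → ℝ := fun k => (k:ℝ)/n with ha
  have hle : ∀ k : ℕ, a k ≤ a (k+1) := by
    intro k; simp only [ha]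
    gcongr
    · push_cast; linarith
  -- a.e. equality on each piece
  have hae : ∀ k : ℕ, (fun y => F (kn n y)) =ᵐ[volume.restrict (Set.Ioc (a k) (a (k+1)))]
      fun _ => F ((k:ℝ)/n) := by
    intro k
    have hne : ∀ᵐ y : ℝ ∂volume, y ≠ a (k+1) := by
      rw [MeasureTheory.ae_iff]
      have : {y : ℝ | ¬ y ≠ a (k+1)} = {a (k+1)} := by ext y; simp
      rw [this]; exact measure_singleton _
    filter_upwards [MeasureTheory.ae_restrict_mem measurableSet_Ioc,
      MeasureTheory.ae_restrict_of_ae hne] with y hy hyne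
    have hylt : y < a (k+1) := lt_of_le_of_ne hy.2 hyne
    have hfloor : ⌊(n:ℝ) * y⌋ = (k : ℤ) := by
      rw [Int.floor_eq_iff]
      constructor
      · have h := hy.1
        simp only [ha] at h
        rw [div_lt_iff₀ hnR] at h
        push_cast
        nlinarith [h]
      · have h := hylt
        simp only [ha] at h
        rw [lt_div_iff₀ hnR] at h
        push_cast at h ⊢
        nlinarith [h]
    simp only [kn, hfloor]
    norm_num
  have hintpiece : ∀ k : ℕ, IntervalIntegrable (fun y => F (kn n y)) volume (a k) (a (k+1)) := by
    intro k
    rw [intervalIntegrable_iff_integrableOn_Ioc_of_le (hle k)]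
    exact (integrableOn_const (measure_Ioc_lt_top).ne).congr (hae k).symm
  have hpiece : ∀ k : ℕ, ∫ y in (a k)..(a (k+1)), F (kn n y) = F ((k:ℝ)/n) * (1/n) := by
    intro k
    rw [intervalIntegral.integral_of_le (hle k), MeasureTheory.integral_congr_ae (hae k),
      MeasureTheory.setIntegral_const, MeasureTheory.measureReal_def, Real.volume_Ioc]
    have : a (k+1) - a k = 1/(n:ℝ) := by
      simp only [ha]; push_cast; field_simp; ring
    rw [this, ENNReal.toReal_ofReal (by positivity), smul_eq_mul]
    ring
  have hsum := intervalIntegral.sum_integral_adjacent_intervals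
    (f := fun y => F (kn n y)) (a := a) (n := n) (fun k _ => hintpiece k)
  have ha0 : a 0 = 0 := by simp [ha]
  have han : a n = 1 := by simp only [ha]; field_simp
  rw [ha0, han] at hsum
  rw [← hsum, Finset.sum_congr rfl (fun k _ => hpiece k), Finset.sum_div]
  exact Finset.sum_congr rfl fun k _ => by ring

lemma phi_abs_le (j : ℕ) (x : ℝ) : |phi j x| ≤ Real.sqrt 2 := by
  rw [phi, abs_mul, abs_of_nonneg (Real.sqrt_nonneg 2)]
  nlinarith [Real.abs_sin_le_one ((j:ℝ) * π * x), Real.sqrt_nonneg 2]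

lemma phiLin_abs_le (n j : ℕ) (x : ℝ) : |phiLin n j x| ≤ Real.sqrt 2 := by
  set u : ℝ := (n:ℝ) * x
  set θ : ℝ := u - (⌊u⌋ : ℝ) with hθ
  have hθ0 : 0 ≤ θ := by
    rw [hθ]; exact sub_nonneg.2 (Int.floor_le u)
  have hθ1 : θ ≤ 1 := by
    rw [hθ]; have := Int.lt_floor_add_one u; linarith
  set A := phi j ((⌊u⌋ : ℝ) / n)
  set B := phi j (((⌊u⌋ : ℝ) + 1) / n)
  have hA : |A| ≤ Real.sqrt 2 := phi_abs_le _ _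
  have hB : |B| ≤ Real.sqrt 2 := phi_abs_le _ _
  have : phiLin n j x = (1 - θ) * A + θ * B := by
    rw [phiLin]; ring
  rw [this]
  calc |(1 - θ) * A + θ * B| ≤ |(1 - θ) * A| + |θ * B| := abs_add_le _ _
    _ = (1 - θ) * |A| + θ * |B| := by
        rw [abs_mul, abs_mul, abs_of_nonneg (by linarith), abs_of_nonneg hθ0]
    _ ≤ (1 - θ) * Real.sqrt 2 + θ * Real.sqrt 2 := by
        gcongr <;> linarith
    _ = Real.sqrt 2 := by ring

lemma phiLin_sq_le (n j : ℕ) (x : ℝ) : (phiLin n j x)^2 ≤ 2 := by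
  have h := phiLin_abs_le n j x
  have h2 : (phiLin n j x)^2 = |phiLin n j x|^2 := (sq_abs _).symm
  rw [h2]
  calc |phiLin n j x|^2 ≤ (Real.sqrt 2)^2 := pow_le_pow_left₀ (abs_nonneg _) h 2
    _ = 2 := Real.sq_sqrt (by norm_num)

lemma phi_continuous (j : ℕ) : Continuous (phi j) := by
  unfold phi; fun_prop

lemma integral_sq_sum (n : ℕ) (hn : 2 ≤ n) (c : ℕ → ℝ) :
    ∫ y in (0:ℝ)..1, (∑ j ∈ Finset.Icc 1 (n-1), c j * phi j (kn n y))^2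
      = ∑ j ∈ Finset.Icc 1 (n-1), (c j)^2 := by
  have hn0 : 0 < n := by omega
  have hnR : (0:ℝ) < n := by exact_mod_cast hn0
  set F : ℝ → ℝ := fun u => (∑ j ∈ Finset.Icc 1 (n-1), c j * phi j u)^2 with hF
  have hFc : Continuous F := by
    apply Continuous.pow
    exact continuous_finset_sum _ fun j _ => (continuous_const.mul (phi_continuous j))
  rw [show (fun y => (∑ j ∈ Finset.Icc 1 (n-1), c j * phi j (kn n y))^2)
      = fun y => F (kn n y) from rfl] at *
  rw [integral_comp_kn n hn0 F hFc]
  -- expand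
  have hexp : ∀ k : ℕ, F ((k:ℝ)/n) = ∑ j ∈ Finset.Icc 1 (n-1), ∑ l ∈ Finset.Icc 1 (n-1),
      (c j * c l) * (2 * (Real.sin ((j:ℝ)*π*k/n) * Real.sin ((l:ℝ)*π*k/n))) := by
    intro k
    rw [hF]
    simp only [pow_two]
    rw [Finset.sum_mul_sum]
    apply Finset.sum_congr rfl; intro j _
    apply Finset.sum_congr rfl; intro l _
    rw [phi, phi]
    have h1 : (j:ℝ) * π * ((k:ℝ)/n) = (j:ℝ)*π*k/n := by ring
    have h2 : (l:ℝ) * π * ((k:ℝ)/n) = (l:ℝ)*π*k/n := by ring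
    rw [h1, h2]
    have h3 : Real.sqrt 2 * Real.sqrt 2 = 2 := Real.mul_self_sqrt (by norm_num)
    linear_combination (Real.sin ((j:ℝ)*π*k/n) * Real.sin ((l:ℝ)*π*k/n) * c j * c l) * h3
  rw [Finset.sum_congr rfl fun k _ => hexp k]
  rw [Finset.sum_comm]
  rw [Finset.sum_div]
  apply Finset.sum_congr rfl; intro j hj
  rw [Finset.mem_Icc] at hj
  rw [Finset.sum_comm, Finset.sum_div]
  have hinner : ∀ l ∈ Finset.Icc 1 (n-1),
      (∑ k ∈ Finset.range n, (c j * c l) * (2 * (Real.sin ((j:ℝ)*π*k/n) * Real.sin ((l:ℝ)*π*k/n))))/(n:ℝ)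
      = if j = l then (c j)^2 else 0 := by
    intro l hl
    rw [Finset.mem_Icc] at hl
    rw [← Finset.mul_sum, ← Finset.mul_sum, disc_orth n j l hn hj.1 hj.2 hl.1 hl.2]
    by_cases hjl : j = l
    · rw [if_pos hjl, if_pos hjl, hjl]
      field_simp
    · rw [if_neg hjl, if_neg hjl]
      simp
  rw [Finset.sum_congr rfl hinner, Finset.sum_ite_eq (Finset.Icc 1 (n-1)) j fun l => (c j)^2,
    if_pos (Finset.mem_Icc.2 hj)]

lemma lamN_bounds (n j : ℕ) (hn : 2 ≤ n) (hj1 : 1 ≤ j) (hj2 : j ≤ n - 1) :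
    4 * (j:ℝ)^2 ≤ -(lamN n j) := by
  have hn0 : (0:ℝ) < n := by positivity
  have hjn : (j:ℝ) < n := by exact_mod_cast (by omega : j < n)
  set θ : ℝ := (j:ℝ) * π / (2 * n) with hθ
  have hθ0 : 0 ≤ θ := by positivity
  have hθle : θ ≤ π / 2 := by
    rw [hθ, div_le_div_iff₀ (by positivity) (by norm_num)]
    nlinarith [Real.pi_pos]
  have hsin : (j:ℝ)/n ≤ Real.sin θ := by
    have h := Real.mul_le_sin hθ0 hθle
    rw [hθ] at h
    have heq : 2 / π * ((j:ℝ) * π / (2 * n)) = (j:ℝ)/n := by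
      have := Real.pi_ne_zero; field_simp
    rw [heq] at h
    rw [hθ]; exact h
  have hjn0 : (0:ℝ) ≤ (j:ℝ)/n := by positivity
  rw [lamN]
  have hsq : ((j:ℝ)/n)^2 ≤ (Real.sin θ)^2 := pow_le_pow_left₀ hjn0 hsin 2
  have hid : 4 * (n:ℝ)^2 * ((j:ℝ)/n)^2 = 4 * (j:ℝ)^2 := by field_simp
  nlinarith [hsq]

lemma lamN_neg (n j : ℕ) (hn : 2 ≤ n) (hj1 : 1 ≤ j) (hj2 : j ≤ n - 1) :
    0 < -(lamN n j) := by
  have h := lamN_bounds n j hn hj1 hj2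
  have hj : (1:ℝ) ≤ (j:ℝ) := by exact_mod_cast hj1
  nlinarith

lemma integral_exp_diff_sq (a s t : ℝ) (ha : 0 < a) (hs : 0 ≤ s) (hst : s ≤ t) :
    ∫ r in (0:ℝ)..s, (Real.exp (-a*(t-r)) - Real.exp (-a*(s-r)))^2
      ≤ min (1/(2*a)) (a*(t-s)^2/2) := by
  set δ := t - s with hδdef
  have hδ : 0 ≤ δ := by rw [hδdef]; linarith
  have hpt : ∀ r : ℝ, (Real.exp (-a*(t-r)) - Real.exp (-a*(s-r)))^2
      = (Real.exp (-a*δ) - 1)^2 * Real.exp ((2*a)*(r-s)) := by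
    intro r
    have h0 : Real.exp (-a*(s-r)) ^ 2 = Real.exp ((2*a)*(r-s)) := by
      rw [sq, ← Real.exp_add]; congr 1; ring
    have h1 : -a*(t-r) = -a*(s-r) + (-a*δ) := by rw [hδdef]; ring
    rw [h1, Real.exp_add,
      show (Real.exp (-a*(s-r)) * Real.exp (-a*δ) - Real.exp (-a*(s-r)))^2
        = (Real.exp (-a*δ) - 1)^2 * Real.exp (-a*(s-r))^2 from by ring, h0]
  rw [intervalIntegral.integral_congr (fun r _ => hpt r)]
  rw [intervalIntegral.integral_const_mul]
  have hI : ∫ r in (0:ℝ)..s, Real.exp ((2*a)*(r-s)) = (1 - Real.exp (-(2*a)*s))/(2*a) := by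
    have hderiv : ∀ r ∈ Set.uIcc (0:ℝ) s, HasDerivAt (fun r => Real.exp ((2*a)*(r-s))/(2*a))
        (Real.exp ((2*a)*(r-s))) r := by
      intro r _
      have h1 : HasDerivAt (fun r : ℝ => (2*a)*(r-s)) (2*a) r := by
        simpa using ((hasDerivAt_id r).sub_const s).const_mul (2*a)
      have h2 := h1.exp
      have h3 := h2.div_const (2*a)
      rw [mul_div_cancel_right₀ _ (by positivity)] at h3
      exact h3
    rw [intervalIntegral.integral_eq_sub_of_hasDerivAt hderiv
      ((Real.continuous_exp.comp (by continuity)).intervalIntegrable _ _)]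
    rw [show (2*a)*(s-s) = 0 by ring, show (2*a)*((0:ℝ)-s) = -(2*a)*s by ring]
    rw [Real.exp_zero]
    ring
  rw [hI]
  have hE : Real.exp (-(2*a)*s) ≤ 1 := Real.exp_le_one_iff.2 (by nlinarith)
  have hE0 : 0 < Real.exp (-(2*a)*s) := Real.exp_pos _
  have hD : Real.exp (-a*δ) ≤ 1 := Real.exp_le_one_iff.2 (by nlinarith)
  have hD0 : 0 < Real.exp (-a*δ) := Real.exp_pos _
  have hDδ : 1 - Real.exp (-a*δ) ≤ a*δ := by
    have := Real.add_one_le_exp (-(a*δ))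
    have h2 : Real.exp (-(a*δ)) = Real.exp (-a*δ) := by ring_nf
    nlinarith
  apply le_min
  · have h1 : (Real.exp (-a*δ) - 1)^2 ≤ 1 := by nlinarith
    have h2 : 0 ≤ (1 - Real.exp (-(2*a)*s)) := by linarith
    have h3 : (1 - Real.exp (-(2*a)*s)) ≤ 1 := by linarith
    have h5 : (1 - Real.exp (-(2*a)*s))/(2*a) ≤ 1/(2*a) := by gcongr
    calc (Real.exp (-a*δ) - 1)^2 * ((1 - Real.exp (-(2*a)*s))/(2*a))
        ≤ 1 * (1/(2*a)) := mul_le_mul h1 h5 (by positivity) (by norm_num)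
      _ = 1/(2*a) := by ring
  · have h1 : (Real.exp (-a*δ) - 1)^2 ≤ (a*δ)^2 := by nlinarith
    have h2 : 0 ≤ (1 - Real.exp (-(2*a)*s)) := by linarith
    have h3 : (1 - Real.exp (-(2*a)*s)) ≤ 1 := by linarith
    have h4 : (Real.exp (-a*δ) - 1)^2 * ((1 - Real.exp (-(2*a)*s))/(2*a)) ≤ (a*δ)^2 * (1/(2*a)) := by
      apply mul_le_mul h1 _ (by positivity) (by positivity)
      rw [div_le_div_iff₀ (by positivity) (by positivity)]
      nlinarith
    calc (Real.exp (-a*δ) - 1)^2 * ((1 - Real.exp (-(2*a)*s))/(2*a)) ≤ (a*δ)^2 * (1/(2*a)) := h4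
      _ = a*δ^2/2 := by field_simp

lemma sum_inv_sq_Ioc (J : ℕ) (hJ : 1 ≤ J) (N : ℕ) :
    ∑ j ∈ Finset.Ioc J N, (1:ℝ)/(j:ℝ)^2 ≤ 1/(J:ℝ) := by
  have hJR : (0:ℝ) < J := by exact_mod_cast hJ
  rcases le_or_gt N J with h | h
  · rw [Finset.Ioc_eq_empty (by omega)]
    simp
  · have key : ∀ N, J ≤ N → ∑ j ∈ Finset.Ioc J N, (1:ℝ)/(j:ℝ)^2 ≤ 1/(J:ℝ) - 1/(N:ℝ) := by
      intro N
      induction N with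
      | zero => intro h0; rw [Finset.Ioc_eq_empty (by omega)]; simp
      | succ M ih =>
        intro hJM
        rcases Nat.lt_or_ge J (M+1) with hlt | hge
        · have hJM' : J ≤ M := by omega
          have hMR : (0:ℝ) < M := by
            have h0 : 0 < M := by omega
            exact_mod_cast h0
          rw [Finset.sum_Ioc_succ_top hJM']
          have hstep : (1:ℝ)/((M:ℝ)+1)^2 ≤ 1/(M:ℝ) - 1/((M:ℝ)+1) := by
            rw [div_sub_div _ _ (ne_of_gt hMR) (by positivity),
              div_le_div_iff₀ (by positivity) (by positivity)]
            nlinarith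
          have hih := ih hJM'
          push_cast
          push_cast at hih
          linarith
        · have hEq : J = M + 1 := by omega
          rw [hEq, Finset.Ioc_self, Finset.sum_empty]
          simp
    have hNR : (0:ℝ) < N := by
      have h0 : 0 < N := by omega
      exact_mod_cast h0
    have h1 : (0:ℝ) < 1/(N:ℝ) := by positivity
    linarith [key N h.le]

lemma min_sum_bound (T δ : ℝ) (hδ : 0 < δ) (hδT : δ ≤ T) (n : ℕ) :
    ∑ j ∈ Finset.Icc 1 (n-1), min ((1:ℝ)/(8*(j:ℝ)^2)) (δ/2)
      ≤ (1 + Real.sqrt T) * Real.sqrt δ := by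
  have hsδ : 0 < Real.sqrt δ := Real.sqrt_pos.2 hδ
  have hmulself : Real.sqrt δ * Real.sqrt δ = δ := Real.mul_self_sqrt hδ.le
  have hsT : Real.sqrt δ ≤ Real.sqrt T := Real.sqrt_le_sqrt hδT
  set J : ℕ := ⌈1/Real.sqrt δ⌉₊ with hJdef
  have hJ1 : 1 ≤ J := Nat.one_le_ceil_iff.2 (by positivity)
  have hJR : (0:ℝ) < J := by exact_mod_cast hJ1
  have hJub : (J:ℝ) ≤ 1/Real.sqrt δ + 1 := le_of_lt (Nat.ceil_lt_add_one (by positivity))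
  have hJlb : 1/Real.sqrt δ ≤ (J:ℝ) := Nat.le_ceil _
  set N : ℕ := max (n-1) J with hN
  have hmin0 : ∀ j : ℕ, (0:ℝ) ≤ min ((1:ℝ)/(8*(j:ℝ)^2)) (δ/2) :=
    fun j => le_min (by positivity) (by positivity)
  calc ∑ j ∈ Finset.Icc 1 (n-1), min ((1:ℝ)/(8*(j:ℝ)^2)) (δ/2)
      ≤ ∑ j ∈ Finset.Icc 1 N, min ((1:ℝ)/(8*(j:ℝ)^2)) (δ/2) := by
        apply Finset.sum_le_sum_of_subset_of_nonneg
          (Finset.Icc_subset_Icc_right (le_max_left _ _)) (fun j _ _ => hmin0 j)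
    _ = (∑ j ∈ Finset.Ioc 0 J, min ((1:ℝ)/(8*(j:ℝ)^2)) (δ/2))
        + ∑ j ∈ Finset.Ioc J N, min ((1:ℝ)/(8*(j:ℝ)^2)) (δ/2) := by
        rw [(by simpa using Finset.Icc_add_one_left_eq_Ioc 0 N : Finset.Icc 1 N = Finset.Ioc 0 N), Finset.sum_Ioc_consecutive _ (Nat.zero_le J) (le_max_right (n-1) J)]
    _ ≤ (J:ℝ) * (δ/2) + (1/8) * (1/(J:ℝ)) := by
        gcongr ?_ + ?_
        · calc ∑ j ∈ Finset.Ioc 0 J, min ((1:ℝ)/(8*(j:ℝ)^2)) (δ/2)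
              ≤ ∑ _j ∈ Finset.Ioc 0 J, (δ/2) :=
                Finset.sum_le_sum (fun j _ => min_le_right _ _)
            _ = (J:ℝ) * (δ/2) := by
                rw [Finset.sum_const, Nat.card_Ioc]
                simp [nsmul_eq_mul]
        · calc ∑ j ∈ Finset.Ioc J N, min ((1:ℝ)/(8*(j:ℝ)^2)) (δ/2)
              ≤ ∑ j ∈ Finset.Ioc J N, (1:ℝ)/(8*(j:ℝ)^2) :=
                Finset.sum_le_sum (fun j _ => min_le_left _ _)
            _ = (1/8) * ∑ j ∈ Finset.Ioc J N, (1:ℝ)/(j:ℝ)^2 := by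
                rw [Finset.mul_sum]
                exact Finset.sum_congr rfl fun j _ =>
                  (one_div_mul_one_div (8:ℝ) ((j:ℝ)^2)).symm
            _ ≤ (1/8) * (1/(J:ℝ)) :=
                mul_le_mul_of_nonneg_left (sum_inv_sq_Ioc J hJ1 N) (by norm_num)
    _ ≤ (1 + Real.sqrt T) * Real.sqrt δ := by
        have h1 : (J:ℝ) * (δ/2) ≤ (1/Real.sqrt δ + 1) * (δ/2) := by
          gcongr
        have h2 : (1/Real.sqrt δ) * δ = Real.sqrt δ := by
          rw [div_mul_eq_mul_div, one_mul, ← hmulself]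
          field_simp
          rw [Real.sqrt_sq hsδ.le]
        have h3 : 1/(J:ℝ) ≤ Real.sqrt δ := by
          rw [div_le_iff₀ hJR]
          rw [div_le_iff₀ hsδ] at hJlb
          linarith
        have h4 : δ ≤ Real.sqrt T * Real.sqrt δ := by nlinarith
        nlinarith

lemma min_trans_bound (a δ : ℝ) (j : ℕ) (hj : 1 ≤ j) (ha : 0 < a)
    (haj : 4*(j:ℝ)^2 ≤ a) (hδ : 0 < δ) :
    min (1/(2*a)) (a*δ^2/2) ≤ min ((1:ℝ)/(8*(j:ℝ)^2)) (δ/2) := by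
  have hjR : (1:ℝ) ≤ (j:ℝ) := by exact_mod_cast hj
  set m := min (1/(2*a)) (a*δ^2/2) with hm
  have hm1 : m ≤ 1/(2*a) := min_le_left _ _
  have hm2 : m ≤ a*δ^2/2 := min_le_right _ _
  have hm0 : 0 ≤ m := le_min (by positivity) (by positivity)
  apply le_min
  · refine hm1.trans ?_
    apply one_div_le_one_div_of_le (by positivity)
    nlinarith
  · have hprod : m * m ≤ (1/(2*a)) * (a*δ^2/2) := mul_le_mul hm1 hm2 hm0 (by positivity)
    have heq : (1/(2*a)) * (a*δ^2/2) = δ^2/4 := by field_simp; ring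
    nlinarith

/-- For every `T > 0` there is a constant `C₁` independent of `n` such that
`∫₀ˢ∫₀¹ (Gⁿ(t-r,x,y) - Gⁿ(s-r,x,y))² dy dr ≤ C₁ √(t-s)` for all `x ∈ [0,1]`,
`0 ≤ s ≤ t ≤ T`. -/
theorem GN_time_difference_bound (T : ℝ) (hT : 0 < T) :
    ∃ C₁ : ℝ, ∀ n : ℕ, 2 ≤ n → ∀ x ∈ Set.Icc (0:ℝ) 1, ∀ s t : ℝ,
      0 ≤ s → s ≤ t → t ≤ T →
      (∫ r in (0:ℝ)..s, ∫ y in (0:ℝ)..1, (GN n (t - r) x y - GN n (s - r) x y)^2)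
        ≤ C₁ * Real.sqrt (t - s) := by
  refine ⟨2 * (1 + Real.sqrt T), ?_⟩
  intro n hn x hx s t hs hst htT
  by_cases hts : t = s
  · subst hts
    simp
  have hδ : 0 < t - s := by
    rcases lt_or_eq_of_le hst with h | h
    · linarith
    · exact absurd h.symm hts
  set c : ℕ → ℝ → ℝ := fun j r =>
    (Real.exp (lamN n j * (t - r)) - Real.exp (lamN n j * (s - r))) * phiLin n j x with hc
  have step1 : ∀ r : ℝ, (∫ y in (0:ℝ)..1, (GN n (t - r) x y - GN n (s - r) x y)^2)
      = ∑ j ∈ Finset.Icc 1 (n-1), (c j r)^2 := by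
    intro r
    have h := integral_sq_sum n hn (fun j => c j r)
    rw [← h]
    apply intervalIntegral.integral_congr
    intro y _
    have hfun : GN n (t - r) x y - GN n (s - r) x y
        = ∑ j ∈ Finset.Icc 1 (n-1), c j r * phi j (kn n y) := by
      rw [GN, GN, ← Finset.sum_sub_distrib]
      exact Finset.sum_congr rfl fun j _ => by simp only [hc]; ring
    show (GN n (t - r) x y - GN n (s - r) x y)^2
      = (∑ j ∈ Finset.Icc 1 (n-1), c j r * phi j (kn n y))^2
    rw [hfun]
  have hcont : ∀ j : ℕ, Continuous (fun r => (c j r)^2) := by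
    intro j
    apply Continuous.pow
    apply Continuous.mul _ continuous_const
    exact (Real.continuous_exp.comp (by continuity)).sub (Real.continuous_exp.comp (by continuity))
  calc (∫ r in (0:ℝ)..s, ∫ y in (0:ℝ)..1, (GN n (t - r) x y - GN n (s - r) x y)^2)
      = ∫ r in (0:ℝ)..s, ∑ j ∈ Finset.Icc 1 (n-1), (c j r)^2 :=
        intervalIntegral.integral_congr (fun r _ => step1 r)
    _ = ∑ j ∈ Finset.Icc 1 (n-1), ∫ r in (0:ℝ)..s, (c j r)^2 :=
        intervalIntegral.integral_finset_sum
          (fun j _ => (hcont j).intervalIntegrable _ _)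
    _ ≤ ∑ j ∈ Finset.Icc 1 (n-1), 2 * min ((1:ℝ)/(8*(j:ℝ)^2)) ((t-s)/2) := by
        apply Finset.sum_le_sum
        intro j hj
        rw [Finset.mem_Icc] at hj
        set a : ℝ := -(lamN n j) with hadef
        have ha : 0 < a := lamN_neg n j hn hj.1 hj.2
        have haj : 4*(j:ℝ)^2 ≤ a := lamN_bounds n j hn hj.1 hj.2
        have hlam : lamN n j = -a := by rw [hadef]; ring
        have hre : ∀ r : ℝ, (c j r)^2
            = (phiLin n j x)^2 * (Real.exp (-a*(t-r)) - Real.exp (-a*(s-r)))^2 := by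
          intro r
          simp only [hc, hlam]
          ring
        rw [intervalIntegral.integral_congr (fun r _ => hre r),
          intervalIntegral.integral_const_mul]
        have hIbound := integral_exp_diff_sq a s t ha hs hst
        have hφ : (phiLin n j x)^2 ≤ 2 := phiLin_sq_le n j x
        have hI0 : 0 ≤ ∫ r in (0:ℝ)..s, (Real.exp (-a*(t-r)) - Real.exp (-a*(s-r)))^2 :=
          intervalIntegral.integral_nonneg hs (fun r _ => sq_nonneg _)
        calc (phiLin n j x)^2 * ∫ r in (0:ℝ)..s, (Real.exp (-a*(t-r)) - Real.exp (-a*(s-r)))^2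
            ≤ 2 * min (1/(2*a)) (a*(t-s)^2/2) := by
              apply mul_le_mul hφ hIbound hI0 (by norm_num)
          _ ≤ 2 * min ((1:ℝ)/(8*(j:ℝ)^2)) ((t-s)/2) := by
              have := min_trans_bound a (t-s) j hj.1 ha haj hδ
              linarith
    _ = 2 * ∑ j ∈ Finset.Icc 1 (n-1), min ((1:ℝ)/(8*(j:ℝ)^2)) ((t-s)/2) :=
        (Finset.mul_sum _ _ _).symm
    _ ≤ 2 * ((1 + Real.sqrt T) * Real.sqrt (t-s)) := by
        have := min_sum_bound T (t-s) hδ (by linarith) n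
        linarith
    _ = 2 * (1 + Real.sqrt T) * Real.sqrt (t-s) := by ring
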